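/- There exist universal constants C₀ > 0 and C₁ > 0 with the following property. Let 0 < a < R and L ≥ C₀ R. Then among all positive real numbers k with k(L−a) < π/2 satisfying the equation kL = tan(k(L−a)) there is a smallest one, and this smallest positive solution k satisfies (3a/L³)(1 − C₁R/L) ≤ k² ≤ (3a/L³)(1 + C₁R/L). -/

import Mathlib

open Real Set

private lemma aux_num_le (x : ℝ) (hx : 0 ≤ x) :
    Real.sin x - x * Real.cos x ≤ x ^ 3 / 3 := by
  have key : Monotone (fun y : ℝ => y ^ 3 / 3 - (Real.sin y - y * Real.cos y)) := by
    apply monotone_of_hasDerivAt_nonneg (f' := fun y => y * (y - Real.sin y))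
    · intro y
      have h1 : HasDerivAt (fun y : ℝ => y ^ 3 / 3) ((3:ℕ) * y ^ 2 / 3) y := by
        simpa using (hasDerivAt_pow 3 y).div_const 3
      have h2 : HasDerivAt (fun y : ℝ => y * Real.cos y)
          (1 * Real.cos y + y * (-Real.sin y)) y :=
        (hasDerivAt_id y).mul (Real.hasDerivAt_cos y)
      have h := h1.sub ((Real.hasDerivAt_sin y).sub h2)
      refine h.congr_deriv ?_
      push_cast; ring
    · intro y
      rcases le_or_gt 0 y with h | h
      · exact mul_nonneg h (sub_nonneg.2 (Real.sin_le h))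
      · have := mul_pos_of_neg_of_neg h (sub_neg.mpr (Real.lt_sin h))
        simp only [Pi.zero_apply]
        linarith
  have h2 := key hx
  simp only [Real.sin_zero, Real.cos_zero] at h2
  norm_num at h2
  linarith

private lemma aux_num_ge {x : ℝ} (hx : 0 ≤ x) (hx1 : x ≤ 1) :
    x ^ 3 / 3 - x ^ 5 / 20 ≤ Real.sin x - x * Real.cos x := by
  have key : MonotoneOn
      (fun y : ℝ => Real.sin y - y * Real.cos y - (y ^ 3 / 3 - y ^ 5 / 20)) (Icc 0 1) := by
    apply monotoneOn_of_hasDerivWithinAt_nonneg (convex_Icc 0 1)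
      (f' := fun y => y * Real.sin y - y ^ 2 + y ^ 4 / 4)
    · fun_prop
    · intro y hy
      have h2 : HasDerivAt (fun y : ℝ => y * Real.cos y)
          (1 * Real.cos y + y * (-Real.sin y)) y :=
        (hasDerivAt_id y).mul (Real.hasDerivAt_cos y)
      have h3 : HasDerivAt (fun y : ℝ => y ^ 3 / 3 - y ^ 5 / 20)
          ((3:ℕ) * y ^ 2 / 3 - (5:ℕ) * y ^ 4 / 20) y :=
        ((hasDerivAt_pow 3 y).div_const 3).sub ((hasDerivAt_pow 5 y).div_const 20)
      have h := ((Real.hasDerivAt_sin y).sub h2).sub h3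
      refine HasDerivAt.hasDerivWithinAt ?_
      convert h using 1
      · rfl
      · push_cast; ring
    · intro y hy
      rw [interior_Icc] at hy
      have h := Real.sin_gt_sub_cube hy.1
      nlinarith [mul_le_mul_of_nonneg_left h.le hy.1.le]
  have h0 : (0:ℝ) ∈ Icc (0:ℝ) 1 := by norm_num
  have h2 := key h0 (mem_Icc.mpr ⟨hx, hx1⟩) hx
  simp only [Real.sin_zero, Real.cos_zero] at h2
  norm_num at h2
  linarith

private lemma tan_bounds {x : ℝ} (hx : 0 < x) (hx2 : x ≤ 1/2) :
    x ^ 3 / 3 * (1 - x ^ 2) ≤ Real.tan x - x ∧ Real.tan x - x ≤ x ^ 3 / 3 * (1 + x ^ 2) := by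
  have hπ := Real.pi_gt_three
  have hcos : 0 < Real.cos x := Real.cos_pos_of_mem_Ioo ⟨by linarith, by linarith⟩
  have hc1 : Real.cos x ≤ 1 := Real.cos_le_one x
  have hc2 : 1 - x ^ 2 / 2 ≤ Real.cos x := Real.one_sub_sq_div_two_le_cos
  have hnum_le := aux_num_le x hx.le
  have hnum_ge := aux_num_ge hx.le (by linarith)
  have hx3 : (0:ℝ) ≤ x ^ 3 := by positivity
  have hxq : x ^ 2 ≤ 1/4 := by nlinarith
  have hnum_pos : 0 ≤ Real.sin x - x * Real.cos x := by
    nlinarith [mul_le_mul_of_nonneg_left hxq hx3]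
  have htan : Real.tan x - x = (Real.sin x - x * Real.cos x) / Real.cos x := by
    rw [Real.tan_eq_sin_div_cos]; field_simp
  constructor
  · rw [htan, le_div_iff₀ hcos]
    have h1 : (1 - x ^ 2) * Real.cos x ≤ 1 - 3 * x ^ 2 / 20 := by nlinarith
    have h2 : x ^ 3 / 3 * ((1 - x ^ 2) * Real.cos x) ≤ x ^ 3 / 3 * (1 - 3 * x ^ 2 / 20) :=
      mul_le_mul_of_nonneg_left h1 (by positivity)
    nlinarith [h2]
  · rw [htan, div_le_iff₀ hcos]
    have h1 : (1:ℝ) ≤ (1 + x ^ 2) * Real.cos x := by nlinarith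
    have h2 : x ^ 3 / 3 * 1 ≤ x ^ 3 / 3 * ((1 + x ^ 2) * Real.cos x) :=
      mul_le_mul_of_nonneg_left h1 (by positivity)
    nlinarith [h2]

/- STATEMENT 15: the Neumann eigenvalue equation kL = tan(k(L−a))
(eq. (A.8)–(A.9) / `keq`, `eq:k2`).  There are universal constants C₀, C₁ > 0
such that for all 0 < a < R and L ≥ C₀R: among the positive solutions k of
kL = tan(k(L−a)) with k(L−a) < π/2 there is a smallest one, and it satisfies
  (3a/L³)(1 − C₁R/L) ≤ k² ≤ (3a/L³)(1 + C₁R/L). -/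

set_option maxHeartbeats 1000000 in
theorem smallest_tan_root_asymptotics :
    ∃ C₀ C₁ : ℝ, 0 < C₀ ∧ 0 < C₁ ∧
      ∀ a R L : ℝ, 0 < a → a < R → C₀ * R ≤ L →
        ∃ k : ℝ,
          IsLeast {k : ℝ | 0 < k ∧ k * (L - a) < Real.pi / 2 ∧
              k * L = Real.tan (k * (L - a))} k ∧
          3 * a / L ^ 3 * (1 - C₁ * R / L) ≤ k ^ 2 ∧
          k ^ 2 ≤ 3 * a / L ^ 3 * (1 + C₁ * R / L) := by
  refine ⟨40, 10, by norm_num, by norm_num, ?_⟩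
  intro a R L ha haR hL
  have hπ := Real.pi_gt_three
  have hR : 0 < R := ha.trans haR
  have hL0 : 0 < L := lt_of_lt_of_le (by positivity) hL
  have haL : 40 * a < L := by linarith only [haR, hL]
  set b := L - a with hb
  clear_value b
  have hb0 : 0 < b := by rw [hb]; linarith only [haL, ha]
  have hb39 : 39 * a < b := by rw [hb]; linarith only [haL]
  have hbL : b ≤ L := by rw [hb]; linarith only [ha]
  have hLba : L = b + a := by rw [hb]; ring
  set s1 : ℝ := Real.sqrt (a / (2 * b)) with hs1def
  set s2 : ℝ := Real.sqrt (4 * a / b) with hs2def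
  have hs1sq : s1 ^ 2 = a / (2 * b) := Real.sq_sqrt (by positivity)
  have hs2sq : s2 ^ 2 = 4 * a / b := Real.sq_sqrt (by positivity)
  have hs1pos : 0 < s1 := Real.sqrt_pos.mpr (by positivity)
  have hs2pos : 0 < s2 := Real.sqrt_pos.mpr (by positivity)
  clear_value s1 s2
  have hs2q : s2 ^ 2 < 1 / 4 := by
    rw [hs2sq, div_lt_iff₀ hb0]; linarith only [hb39, ha]
  have hs2half : s2 < 1 / 2 := by
    nlinarith only [hs2q, hs2pos, sq_nonneg (s2 - 1/2)]
  have hs1q : s1 ^ 2 < 1 / 4 := by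
    rw [hs1sq, div_lt_iff₀ (by positivity)]; linarith only [hb39, ha]
  have hs1half : s1 < 1 / 2 := by
    nlinarith only [hs1q, hs1pos, sq_nonneg (s1 - 1/2)]
  have hs12 : s1 < s2 := by
    have h : a / (2 * b) < 4 * a / b := by
      rw [div_lt_div_iff₀ (by positivity) hb0]
      nlinarith only [mul_pos ha hb0]
    rw [hs1def, hs2def]
    exact Real.sqrt_lt_sqrt (by positivity) h
  set k1 : ℝ := s1 / b with hk1def
  set k2 : ℝ := s2 / b with hk2def
  set M : ℝ := 1 / (2 * b) with hMdef
  clear_value k1 k2 M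
  have hk1pos : 0 < k1 := hk1def ▸ div_pos hs1pos hb0
  have hk2pos : 0 < k2 := hk2def ▸ div_pos hs2pos hb0
  have hk1b : k1 * b = s1 := by rw [hk1def]; exact div_mul_cancel₀ _ hb0.ne'
  have hk2b : k2 * b = s2 := by rw [hk2def]; exact div_mul_cancel₀ _ hb0.ne'
  have hk1sq : k1 ^ 2 = a / (2 * b ^ 3) := by
    rw [hk1def, div_pow, hs1sq]
    rw [div_div]; ring_nf
  have hk2M : k2 ≤ M := by
    rw [hk2def, hMdef, div_le_div_iff₀ hb0 (by positivity)]
    nlinarith only [hs2half, hb0]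
  set φ : ℝ → ℝ := fun k => k * L * Real.cos (k * b) - Real.sin (k * b) with hφ
  have hφcont : Continuous φ := by rw [hφ]; fun_prop
  clear_value φ
  have heq : ∀ k : ℝ, 0 < k → k * b ≤ 1 / 2 → (φ k = 0 ↔ k * L = Real.tan (k * b)) := by
    intro k hk hkb
    have hkb0 : 0 < k * b := mul_pos hk hb0
    have hcos : 0 < Real.cos (k * b) := by
      apply Real.cos_pos_of_mem_Ioo
      rw [Set.mem_Ioo]
      constructor <;> linarith only [hπ, hkb0, hkb]
    have hφk : φ k = k * L * Real.cos (k * b) - Real.sin (k * b) := by rw [hφ]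
    rw [hφk, Real.tan_eq_sin_div_cos, eq_div_iff hcos.ne']
    constructor <;> intro h <;> linarith only [h]
  -- sign at k1
  have hsign1 : 0 < φ k1 := by
    have hcos : 0 < Real.cos s1 := by
      apply Real.cos_pos_of_mem_Ioo
      rw [Set.mem_Ioo]
      constructor <;> linarith only [hπ, hs1pos, hs1half]
    have htb := (tan_bounds hs1pos hs1half.le).2
    have hcube : s1 ^ 3 = s1 * (a / (2 * b)) := by rw [← hs1sq]; ring
    have h54 : s1 ^ 3 / 3 * (1 + s1 ^ 2) ≤ 5 / 12 * s1 ^ 3 := by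
      nlinarith only [hs1q, pow_pos hs1pos 3]
    have h5 : Real.tan s1 - s1 ≤ 5 / 12 * (s1 * (a / (2 * b))) := by
      rw [← hcube]; linarith only [htb, h54]
    have hk1L : k1 * L = s1 + s1 * a / b := by
      rw [hk1def, hLba]; field_simp
    have hlt : Real.tan s1 < k1 * L := by
      rw [hk1L]
      have hab : s1 * (a / (2 * b)) = s1 * a / b / 2 := by ring
      have hpos : 0 < s1 * a / b := by positivity
      linarith only [h5, hab, hpos]
    have hsin : Real.sin s1 = Real.tan s1 * Real.cos s1 := (Real.tan_mul_cos hcos.ne').symm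
    have hφk : φ k1 = k1 * L * Real.cos s1 - Real.sin s1 := by simp only [hφ, hk1b]
    rw [hφk, hsin]
    nlinarith only [mul_pos hcos (sub_pos.mpr hlt)]
  -- sign at k2
  have hsign2 : φ k2 < 0 := by
    have hcos : 0 < Real.cos s2 := by
      apply Real.cos_pos_of_mem_Ioo
      rw [Set.mem_Ioo]
      constructor <;> linarith only [hπ, hs2pos, hs2half]
    have htb := (tan_bounds hs2pos hs2half.le).1
    have hcube : s2 ^ 3 = s2 * (4 * a / b) := by rw [← hs2sq]; ring
    have h54 : s2 ^ 3 / 4 < s2 ^ 3 / 3 * (1 - s2 ^ 2) := by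
      nlinarith only [hs2q, pow_pos hs2pos 3]
    have h5 : s2 * (a / b) < Real.tan s2 - s2 := by
      have hq : s2 ^ 3 / 4 = s2 * (a / b) := by
        rw [hcube]; ring
      linarith only [htb, h54, hq]
    have hk2L : k2 * L = s2 + s2 * a / b := by
      rw [hk2def, hLba]; field_simp
    have hlt : k2 * L < Real.tan s2 := by
      rw [hk2L]
      have hab : s2 * (a / b) = s2 * a / b := by ring
      linarith only [h5, hab]
    have hsin : Real.sin s2 = Real.tan s2 * Real.cos s2 := (Real.tan_mul_cos hcos.ne').symm
    have hφk : φ k2 = k2 * L * Real.cos s2 - Real.sin s2 := by simp only [hφ, hk2b]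
    rw [hφk, hsin]
    nlinarith only [mul_pos hcos (sub_pos.mpr hlt)]
  -- IVT
  have hk12 : k1 ≤ k2 := by
    rw [hk1def, hk2def]
    gcongr
  obtain ⟨ks, hksmem, hkseq⟩ :=
    intermediate_value_Icc' hk12 hφcont.continuousOn ⟨hsign2.le, hsign1.le⟩
  set T : Set ℝ := Icc k1 M ∩ {k | φ k = 0} with hT
  clear_value T
  have hTmem : ∀ k : ℝ, k ∈ T ↔ (k1 ≤ k ∧ k ≤ M) ∧ φ k = 0 := by
    intro k
    rw [hT]
    simp [Set.mem_Icc]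
  have hTclosed : IsClosed T := by
    rw [hT]
    exact isClosed_Icc.inter (isClosed_eq hφcont continuous_const)
  have hksT : ks ∈ T := (hTmem ks).mpr ⟨⟨hksmem.1, hksmem.2.trans hk2M⟩, hkseq⟩
  have hTbdd : BddBelow T := ⟨k1, fun k hk => ((hTmem k).mp hk).1.1⟩
  set k0 := sInf T with hk0def
  clear_value k0
  have hk0T : k0 ∈ T := by rw [hk0def]; exact hTclosed.csInf_mem ⟨ks, hksT⟩ hTbdd
  have hk0T' := (hTmem k0).mp hk0T
  have hk0pos : 0 < k0 := lt_of_lt_of_le hk1pos hk0T'.1.1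
  have hMb : M * b = 1 / 2 := by rw [hMdef]; field_simp
  have hk0bhalf : k0 * b ≤ 1 / 2 := by
    nlinarith only [hk0T'.1.2, hb0, hMb]
  have hk0eq : k0 * L = Real.tan (k0 * b) := (heq k0 hk0pos hk0bhalf).mp hk0T'.2
  -- membership of k0 in the solution set
  have hmem : k0 ∈ {k : ℝ | 0 < k ∧ k * b < Real.pi / 2 ∧ k * L = Real.tan (k * b)} :=
    ⟨hk0pos, by linarith only [hk0bhalf, hπ], hk0eq⟩
  -- k0 is a lower bound of the solution set
  have hlbprop : ∀ k ∈ {k : ℝ | 0 < k ∧ k * b < Real.pi / 2 ∧ k * L = Real.tan (k * b)},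
      k0 ≤ k := by
    rintro k ⟨hkpos, hkblt, hkeq⟩
    rcases le_or_gt k M with hkM | hkM
    · have hkb2 : k * b ≤ 1 / 2 := by nlinarith only [hkM, hb0, hMb]
      have hx0 : 0 < k * b := mul_pos hkpos hb0
      have hφk : φ k = 0 := (heq k hkpos hkb2).mpr hkeq
      have hka : k * a = Real.tan (k * b) - k * b := by rw [← hkeq, hLba]; ring
      have htb := (tan_bounds hx0 hkb2).2
      have hxq : (k * b) ^ 2 ≤ 1 / 4 := by nlinarith only [hx0, hkb2]
      have h54 : (k * b) ^ 3 / 3 * (1 + (k * b) ^ 2) ≤ 5 / 12 * (k * b) ^ 3 := by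
        nlinarith only [hxq, pow_pos hx0 3]
      have hka2 : k * a ≤ 5 / 12 * (k * b) ^ 3 := by
        linarith only [htb, hka, h54]
      have hstep : k * a ≤ k * (5 / 12 * k ^ 2 * b ^ 3) := by
        linarith only [hka2]
      have ha2 : a ≤ 5 / 12 * k ^ 2 * b ^ 3 := le_of_mul_le_mul_left hstep hkpos
      have hk1k : k1 ≤ k := by
        by_contra hcon
        push_neg at hcon
        have hksq : k * k ≤ k1 * k1 :=
          mul_le_mul hcon.le hcon.le hkpos.le hk1pos.le
        have hb3 : (0:ℝ) < b ^ 3 := by positivity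
        have h512 : k1 ^ 2 * b ^ 3 = a / 2 := by
          rw [hk1sq]; field_simp
        nlinarith only [ha2, hksq, h512, hb3, ha]
      rw [hk0def]
      exact csInf_le hTbdd ((hTmem k).mpr ⟨⟨hk1k, hkM⟩, hφk⟩)
    · linarith only [hk0T'.1.2, hkM]
  -- quantitative bounds for k0
  have hx0 : 0 < k0 * b := mul_pos hk0pos hb0
  obtain ⟨hlow, hup⟩ := tan_bounds hx0 hk0bhalf
  have hka : k0 * a = Real.tan (k0 * b) - k0 * b := by rw [← hk0eq, hLba]; ring
  have hxq : (k0 * b) ^ 2 ≤ 1 / 4 := by nlinarith only [hx0, hk0bhalf]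
  have hx4 : (k0 * b) ^ 2 * b ≤ 4 * a := by
    have h54 : (k0 * b) ^ 3 / 4 ≤ (k0 * b) ^ 3 / 3 * (1 - (k0 * b) ^ 2) := by
      nlinarith only [hxq, pow_pos hx0 3]
    have h1 : (k0 * b) ^ 3 / 4 ≤ k0 * a := by linarith only [hlow, hka, h54]
    have h2 : k0 * ((k0 * b) ^ 2 * b / 4) ≤ k0 * a := by linarith only [h1]
    have h3 := le_of_mul_le_mul_left h2 hk0pos
    linarith only [h3]
  have hub : k0 ^ 2 * b ^ 2 * (b - (k0 * b) ^ 2 * b) ≤ 3 * a := by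
    have h1 : k0 * (k0 ^ 2 * b ^ 2 * (b - (k0 * b) ^ 2 * b)) ≤ k0 * (3 * a) := by
      linarith only [hlow, hka]
    exact le_of_mul_le_mul_left h1 hk0pos
  have hub2 : k0 ^ 2 * b ^ 2 * (b - 4 * a) ≤ 3 * a := by
    have h1 : k0 ^ 2 * b ^ 2 * (b - 4 * a) ≤ k0 ^ 2 * b ^ 2 * (b - (k0 * b) ^ 2 * b) :=
      mul_le_mul_of_nonneg_left (by linarith only [hx4]) (by positivity)
    linarith only [h1, hub]
  have hlb : 3 * a ≤ k0 ^ 2 * b ^ 2 * (b + (k0 * b) ^ 2 * b) := by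
    have h1 : k0 * (3 * a) ≤ k0 * (k0 ^ 2 * b ^ 2 * (b + (k0 * b) ^ 2 * b)) := by
      linarith only [hup, hka]
    exact le_of_mul_le_mul_left h1 hk0pos
  have hlb2 : 3 * a ≤ k0 ^ 2 * L ^ 2 * (L + 3 * a) := by
    have hba4 : b + 4 * a = L + 3 * a := by rw [hLba]; ring
    have h1 : b + (k0 * b) ^ 2 * b ≤ L + 3 * a := by linarith only [hx4, hba4]
    have hbb : b ^ 2 ≤ L ^ 2 := by nlinarith only [hbL, hb0, hL0]
    have h2 : k0 ^ 2 * b ^ 2 ≤ k0 ^ 2 * L ^ 2 :=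
      mul_le_mul_of_nonneg_left hbb (sq_nonneg k0)
    calc 3 * a ≤ k0 ^ 2 * b ^ 2 * (b + (k0 * b) ^ 2 * b) := hlb
      _ ≤ k0 ^ 2 * L ^ 2 * (L + 3 * a) := by
          apply mul_le_mul h2 h1 (by positivity) (by positivity)
  refine ⟨k0, ⟨hmem, hlbprop⟩, ?_, ?_⟩
  · have hLne : L ≠ 0 := hL0.ne'
    have hrew : 3 * a / L ^ 3 * (1 - 10 * R / L) = 3 * a * (L - 10 * R) / L ^ 4 := by
      field_simp
    rw [hrew, div_le_iff₀ (by positivity)]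
    have hL10 : (0:ℝ) ≤ L - 10 * R := by linarith only [hL, hR]
    have h1 : (L + 3 * a) * (L - 10 * R) ≤ L ^ 2 := by
      nlinarith only [mul_le_mul_of_nonneg_right haR.le hL0.le,
        mul_nonneg hR.le hL0.le, mul_nonneg ha.le hR.le]
    nlinarith only [mul_le_mul_of_nonneg_right hlb2 hL10,
      mul_le_mul_of_nonneg_left h1 (show (0:ℝ) ≤ k0 ^ 2 * L ^ 2 by positivity)]
  · have hLne : L ≠ 0 := hL0.ne'
    have hrew : 3 * a / L ^ 3 * (1 + 10 * R / L) = 3 * a * (L + 10 * R) / L ^ 4 := by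
      field_simp
    rw [hrew, le_div_iff₀ (by positivity)]
    have hbb : b ^ 2 * (b - 4 * a) = (L - a) ^ 2 * (L - 5 * a) := by rw [hb]; ring
    have hg : 0 ≤ 7 * L ^ 2 - 11 * L * (a + R) + 5 * (a ^ 2 + a * R + R ^ 2) := by
      nlinarith only [mul_le_mul_of_nonneg_right haR.le hL0.le,
        mul_le_mul_of_nonneg_right hL hL0.le, sq_nonneg a, sq_nonneg R,
        mul_nonneg ha.le hR.le]
    have h1 : (L - R) ^ 2 * (L - 5 * R) ≤ (L - a) ^ 2 * (L - 5 * a) := by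
      nlinarith only [hg, sub_nonneg.mpr haR.le]
    have h2 : L ^ 4 ≤ (L - R) ^ 2 * (L - 5 * R) * (L + 10 * R) := by
      nlinarith only [mul_le_mul_of_nonneg_right hL
          (show (0:ℝ) ≤ R * L ^ 2 by positivity),
        mul_le_mul_of_nonneg_right (show R ≤ L by linarith only [hL, hR])
          (show (0:ℝ) ≤ R ^ 3 by positivity),
        mul_nonneg (mul_nonneg hR.le hR.le) (mul_nonneg hL0.le hL0.le),
        mul_nonneg (mul_nonneg (mul_nonneg hR.le hR.le) hR.le) hL0.le]
    have hkey : L ^ 4 ≤ b ^ 2 * (b - 4 * a) * (L + 10 * R) := by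
      rw [hbb]
      nlinarith only [h2, mul_le_mul_of_nonneg_right h1
        (show (0:ℝ) ≤ L + 10 * R by positivity)]
    nlinarith only [mul_le_mul_of_nonneg_left hkey (sq_nonneg k0),
      mul_le_mul_of_nonneg_right hub2 (show (0:ℝ) ≤ L + 10 * R by positivity)]
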